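/- For the Möbius map h(z) = 4z/(2 − z) on the reals, for every real z with z ≠ 0 and such that the forward orbit h^n(z) is defined for all n (avoids the pole at 2), the sequence h^n(z) converges to −2. -/

import Mathlib

theorem stmt7 (z : ℝ) (hz : z ≠ 0)
    (h : ∀ k : ℕ, (fun w : ℝ => 4 * w / (2 - w))^[k] z ≠ 2) :
    Filter.Tendsto (fun n : ℕ => (fun w : ℝ => 4 * w / (2 - w))^[n] z)
      Filter.atTop (nhds (-2)) := by
  set F : ℝ → ℝ := fun w => 4 * w / (2 - w) with hF
  by_cases hz2 : z = -2
  · have hconst : ∀ n, F^[n] z = -2 := by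
      intro n; induction n with
      | zero => simpa using hz2
      | succ n ih => rw [Function.iterate_succ_apply', ih]; norm_num [hF]
    simp only [hconst]; exact (tendsto_const_nhds : Filter.Tendsto (fun _ : ℕ => (-2:ℝ)) Filter.atTop (nhds (-2)))
  · set u : ℝ := z / (z + 2) with hu
    have hz2' : z + 2 ≠ 0 := fun hh => hz2 (by linarith)
    have hu0 : u ≠ 0 := div_ne_zero hz hz2'
    have key : ∀ n, F^[n] z ≠ 0 ∧ F^[n] z ≠ -2 ∧
        F^[n] z / (F^[n] z + 2) = 2 ^ n * u := by
      intro n; induction n with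
      | zero =>
        refine ⟨hz, hz2, ?_⟩
        simp [hu]
      | succ n ih =>
        obtain ⟨h0, hm2, hr⟩ := ih
        have h2 : (2 : ℝ) - F^[n] z ≠ 0 := by
          have hn := h n; intro hh; apply hn; simp only [hF] at hh ⊢; linarith
        have hp2 : F^[n] z + 2 ≠ 0 := fun hh => hm2 (by linarith)
        have hw : F^[n] z = 2 ^ n * u * (F^[n] z + 2) := by
          rw [div_eq_iff hp2] at hr; exact hr
        rw [Function.iterate_succ_apply']
        have hFw : F (F^[n] z) = 4 * F^[n] z / (2 - F^[n] z) := rfl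
        refine ⟨?_, ?_, ?_⟩
        · rw [hFw]; exact div_ne_zero (mul_ne_zero (by norm_num) h0) h2
        · rw [hFw]; intro hh
          rw [div_eq_iff h2] at hh
          apply hm2; linarith
        · rw [hFw]
          have hden : 4 * F^[n] z / (2 - F^[n] z) + 2 ≠ 0 := by
            have : 4 * F^[n] z / (2 - F^[n] z) + 2 = 2 * (F^[n] z + 2) / (2 - F^[n] z) := by
              field_simp; ring
            rw [this]
            exact div_ne_zero (mul_ne_zero two_ne_zero hp2) h2
          have hstep : 4 * F^[n] z / (2 - F^[n] z) / (4 * F^[n] z / (2 - F^[n] z) + 2)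
              = 2 * (F^[n] z / (F^[n] z + 2)) := by
            have h4 : (4:ℝ) + F^[n] z * 2 ≠ 0 := by intro hh; apply hp2; linarith
            field_simp [h4]
            linear_combination 2 * mul_inv_cancel₀ h4
          rw [hstep, hr, pow_succ]; ring
    have hform : ∀ n, F^[n] z = 2 / ((2 ^ n * u)⁻¹ - 1) := by
      intro n
      obtain ⟨h0, hm2, hr⟩ := key n
      have hp2 : F^[n] z + 2 ≠ 0 := fun hh => hm2 (by linarith)
      have hru : (2:ℝ) ^ n * u ≠ 0 := mul_ne_zero (by positivity) hu0
      have hw : F^[n] z = 2 ^ n * u * (F^[n] z + 2) := by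
        rw [div_eq_iff hp2] at hr; exact hr
      have hr1 : (2:ℝ) ^ n * u ≠ 1 := by
        intro hh; rw [hh, one_mul] at hw; linarith
      have hne : (2 ^ n * u)⁻¹ - 1 ≠ 0 := by
        intro hh
        apply hr1
        have : ((2:ℝ) ^ n * u)⁻¹ = 1 := by linarith
        field_simp at this; linarith
      rw [eq_div_iff hne]
      field_simp
      linarith [hw]
    have hlim : Filter.Tendsto (fun n : ℕ => ((2:ℝ) ^ n * u)⁻¹) Filter.atTop (nhds 0) := by
      have h1 : Filter.Tendsto (fun n : ℕ => ((2:ℝ) ^ n)⁻¹) Filter.atTop (nhds 0) :=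
        (tendsto_pow_atTop_atTop_of_one_lt one_lt_two).inv_tendsto_atTop
      have := h1.mul_const u⁻¹
      simpa [mul_inv, mul_comm] using this
    have : Filter.Tendsto (fun n : ℕ => 2 / (((2:ℝ) ^ n * u)⁻¹ - 1)) Filter.atTop (nhds (-2)) := by
      have hd := Filter.Tendsto.div (tendsto_const_nhds : Filter.Tendsto (fun _ : ℕ => (2:ℝ)) Filter.atTop (nhds 2)) (hlim.sub_const 1) (by norm_num)
      have he : (2:ℝ) / (0 - 1) = -2 := by norm_num
      rw [he] at hd
      exact hd
    refine this.congr fun n => ?_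
    rw [← hform n]
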